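/- Let A_1,…,A_n ∈ ℝ³ be fixed (a_i := A_{i+1} − A_i constant) and let v_i, w_i : ℝ → ℝ³ (i modulo n) be differentiable functions such that for every i the real-valued functions t ↦ ⟨v_i(t),v_i(t)⟩, ⟨w_i(t),w_i(t)⟩, ⟨v_i(t),w_i(t)⟩, ⟨a_{i−1},v_i(t)⟩, ⟨a_i,w_i(t)⟩ and ⟨w_i(t),v_{i+1}(t)⟩ are constant (an isometric motion of the belt with the central face fixed). Fix t₀ ∈ ℝ and assume that at t₀ the general position conditions hold: for every i, v_i(t₀) and w_i(t₀) are linearly independent, neither a_{i−1} nor a_i lies in span{v_i(t₀),w_i(t₀)}, and (a_i,w_i(t₀),v_{i+1}(t₀)) ≠ 0. Then there exists λ ∈ ℝ such that for all i: v_i′(t₀) = λ·Π_{i−1}·[a_{i−1},v_i(t₀)] and w_i′(t₀) = λ·Π_i·[a_i,w_i(t₀)]; that is, the velocity of the motion is a scalar multiple of the vector field ξ_n at the configuration. -/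

import Mathlib

open Matrix

/-- The scalar triple product `(a, b, c) = ⟨a, [b, c]⟩` in `ℝ³`. -/
noncomputable def tripleProd (a b c : Fin 3 → ℝ) : ℝ := a ⬝ᵥ crossProduct b c

section Aux

lemma triple_eq_det (a b c : Fin 3 → ℝ) : tripleProd a b c = Matrix.det ![a, b, c] :=
  triple_product_eq_det a b c

lemma cross_dot_left (a v w : Fin 3 → ℝ) : (crossProduct a v) ⬝ᵥ w = tripleProd a v w := by
  simp [tripleProd, crossProduct, dotProduct, Fin.sum_univ_three]; ring

lemma dot_cross' (x a w : Fin 3 → ℝ) : x ⬝ᵥ crossProduct a w = - tripleProd a x w := by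
  simp [tripleProd, crossProduct, dotProduct, Fin.sum_univ_three]; ring

lemma cross_dot_self_left (a v : Fin 3 → ℝ) : (crossProduct a v) ⬝ᵥ a = 0 := by
  simp [crossProduct, dotProduct, Fin.sum_univ_three]; ring

lemma cross_dot_self_right (a v : Fin 3 → ℝ) : (crossProduct a v) ⬝ᵥ v = 0 := by
  simp [crossProduct, dotProduct, Fin.sum_univ_three]; ring

lemma lagrange (a v : Fin 3 → ℝ) :
    (crossProduct a v) ⬝ᵥ (crossProduct a v) = (a ⬝ᵥ a) * (v ⬝ᵥ v) - (a ⬝ᵥ v)^2 := by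
  simp [crossProduct, dotProduct, Fin.sum_univ_three]; ring

lemma triple_cross_self (a v : Fin 3 → ℝ) :
    tripleProd a v (crossProduct a v) = (crossProduct a v) ⬝ᵥ (crossProduct a v) := by
  simp [tripleProd, crossProduct, dotProduct, Fin.sum_univ_three]; ring

lemma uu_id (a v : Fin 3 → ℝ) :
    ((v ⬝ᵥ v) • a - (a ⬝ᵥ v) • v) ⬝ᵥ ((v ⬝ᵥ v) • a - (a ⬝ᵥ v) • v)
      = (v ⬝ᵥ v) * ((a ⬝ᵥ a) * (v ⬝ᵥ v) - (a ⬝ᵥ v)^2) := by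
  simp [dotProduct, Fin.sum_univ_three]; ring

lemma triple_ne_zero {a b c : Fin 3 → ℝ} (h : LinearIndependent ℝ ![a, b, c]) :
    tripleProd a b c ≠ 0 := by
  rw [triple_eq_det]
  have h' : LinearIndependent ℝ (fun i => (Matrix.of ![a, b, c]) i) := h
  replace h' := (Matrix.linearIndependent_rows_iff_isUnit (A := Matrix.of ![a, b, c])).mp h'
  exact isUnit_iff_ne_zero.mp (h'.map (Matrix.detMonoidHom (n := Fin 3) (R := ℝ)))

lemma li_of_det_ne {a b c : Fin 3 → ℝ} (h : Matrix.det ![a, b, c] ≠ 0) :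
    LinearIndependent ℝ ![a, b, c] := by
  have : IsUnit (Matrix.of ![a, b, c]) := by
    rw [Matrix.isUnit_iff_isUnit_det]; exact isUnit_iff_ne_zero.mpr h
  exact Matrix.linearIndependent_rows_iff_isUnit.mpr this

lemma cross_dot_cross_ne {a v : Fin 3 → ℝ} (h : LinearIndependent ℝ ![a, v]) :
    (crossProduct a v) ⬝ᵥ (crossProduct a v) ≠ 0 := by
  obtain ⟨hv0, hav⟩ := linearIndependent_fin2.mp h
  simp only [Matrix.cons_val_one, Matrix.head_cons, Matrix.cons_val_zero] at hv0 hav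
  intro hc
  have hl := lagrange a v
  rw [hc] at hl
  have hvv : v ⬝ᵥ v ≠ 0 := fun h0 => hv0 (dotProduct_self_eq_zero.mp h0)
  have huu : ((v ⬝ᵥ v) • a - (a ⬝ᵥ v) • v) ⬝ᵥ ((v ⬝ᵥ v) • a - (a ⬝ᵥ v) • v) = 0 := by
    rw [uu_id, ← hl, mul_zero]
  have hu0 := sub_eq_zero.mp (dotProduct_self_eq_zero.mp huu)
  have : ((v ⬝ᵥ v)⁻¹ * (a ⬝ᵥ v)) • v = a := by
    rw [mul_smul, ← hu0, smul_smul, inv_mul_cancel₀ hvv, one_smul]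
  exact hav _ this

lemma perp_general {a v c x : Fin 3 → ℝ} (hli3 : LinearIndependent ℝ ![a, v, c])
    (hcc : c ⬝ᵥ c ≠ 0) (hca : c ⬝ᵥ a = 0) (hcv : c ⬝ᵥ v = 0)
    (h1 : x ⬝ᵥ a = 0) (h2 : x ⬝ᵥ v = 0) :
    ∃ μ : ℝ, x = μ • c := by
  refine ⟨(x ⬝ᵥ c) / (c ⬝ᵥ c), ?_⟩
  set μ := (x ⬝ᵥ c) / (c ⬝ᵥ c) with hμ
  set z : Fin 3 → ℝ := x - μ • c with hz
  suffices hz0 : z = 0 from sub_eq_zero.mp hz0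
  have za : z ⬝ᵥ a = 0 := by
    rw [hz, sub_dotProduct, h1, smul_dotProduct, hca, smul_zero, sub_zero]
  have zv : z ⬝ᵥ v = 0 := by
    rw [hz, sub_dotProduct, h2, smul_dotProduct, hcv, smul_zero, sub_zero]
  have zc : z ⬝ᵥ c = 0 := by
    rw [hz, sub_dotProduct, smul_dotProduct, smul_eq_mul, hμ,
      div_mul_cancel₀ _ hcc, sub_self]
  have hspan : Submodule.span ℝ (Set.range ![a, v, c]) = ⊤ := by
    have card_eq : Fintype.card (Fin 3) = Module.finrank ℝ (Fin 3 → ℝ) := by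
      simp [Module.finrank_fin_fun]
    exact hli3.span_eq_top_of_card_eq_finrank card_eq
  have hmem : z ∈ Submodule.span ℝ (Set.range ![a, v, c]) := by rw [hspan]; trivial
  have hzy : ∀ y ∈ Submodule.span ℝ (Set.range ![a, v, c]), z ⬝ᵥ y = 0 := by
    intro y hy
    induction hy using Submodule.span_induction with
    | mem y hy =>
      obtain ⟨i, rfl⟩ := hy
      fin_cases i
      · exact za
      · exact zv
      · exact zc
    | zero => simp
    | add y₁ y₂ _ _ hy₁ hy₂ => rw [dotProduct_add, hy₁, hy₂, add_zero]
    | smul r y _ hy => rw [dotProduct_smul, hy, smul_zero]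
  exact dotProduct_self_eq_zero.mp (hzy z hmem)

lemma key_perp {a v x : Fin 3 → ℝ} (h : LinearIndependent ℝ ![a, v])
    (h1 : x ⬝ᵥ a = 0) (h2 : x ⬝ᵥ v = 0) : ∃ μ : ℝ, x = μ • crossProduct a v := by
  have hcc := cross_dot_cross_ne h
  refine perp_general ?_ hcc (cross_dot_self_left a v) (cross_dot_self_right a v) h1 h2
  apply li_of_det_ne
  rw [← triple_eq_det, triple_cross_self]
  exact hcc

lemma hasDerivAt_dot {f g : ℝ → Fin 3 → ℝ} {f' g' : Fin 3 → ℝ} {t : ℝ}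
    (hf : HasDerivAt f f' t) (hg : HasDerivAt g g' t) :
    HasDerivAt (fun s => f s ⬝ᵥ g s) (f' ⬝ᵥ g t + f t ⬝ᵥ g') t := by
  have h : ∀ i : Fin 3, HasDerivAt (fun s => f s i * g s i)
      (f' i * g t i + f t i * g' i) t :=
    fun i => ((hasDerivAt_pi.mp hf i).mul (hasDerivAt_pi.mp hg i))
  have := HasDerivAt.fun_sum (fun i (_ : i ∈ Finset.univ) => h i)
  simpa [dotProduct, Finset.sum_add_distrib] using this

lemma deriv_dot_eq_zero {f g : ℝ → Fin 3 → ℝ} (hf : Differentiable ℝ f)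
    (hg : Differentiable ℝ g) (t₀ : ℝ) (hc : ∀ s u : ℝ, f s ⬝ᵥ g s = f u ⬝ᵥ g u) :
    deriv f t₀ ⬝ᵥ g t₀ + f t₀ ⬝ᵥ deriv g t₀ = 0 := by
  have h := hasDerivAt_dot (hf t₀).hasDerivAt (hg t₀).hasDerivAt
  have heq : (fun s => f s ⬝ᵥ g s) = fun _ => f t₀ ⬝ᵥ g t₀ := funext fun s => hc s t₀
  have h0 : deriv (fun s => f s ⬝ᵥ g s) t₀ = 0 := by rw [heq]; simp
  rw [← h.deriv, h0]

lemma deriv_const_dot {c : Fin 3 → ℝ} {g : ℝ → Fin 3 → ℝ} (hg : Differentiable ℝ g)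
    (t₀ : ℝ) (hc : ∀ s u : ℝ, c ⬝ᵥ g s = c ⬝ᵥ g u) : c ⬝ᵥ deriv g t₀ = 0 := by
  have := deriv_dot_eq_zero (differentiable_const c) hg t₀ hc
  simpa using this

lemma deriv_self_dot {f : ℝ → Fin 3 → ℝ} (hf : Differentiable ℝ f) (t₀ : ℝ)
    (hc : ∀ s u : ℝ, f s ⬝ᵥ f s = f u ⬝ᵥ f u) : deriv f t₀ ⬝ᵥ f t₀ = 0 := by
  have h := deriv_dot_eq_zero hf hf t₀ hc
  have hcomm : f t₀ ⬝ᵥ deriv f t₀ = deriv f t₀ ⬝ᵥ f t₀ := dotProduct_comm _ _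
  rw [hcomm] at h; linarith

lemma li_cons {a v w : Fin 3 → ℝ} (h : LinearIndependent ℝ ![v, w])
    (ha : a ∉ Submodule.span ℝ ({v, w} : Set (Fin 3 → ℝ))) :
    LinearIndependent ℝ ![a, v, w] := by
  rw [show (![a, v, w] : Fin 3 → Fin 3 → ℝ) = Fin.cons a ![v, w] from rfl,
    linearIndependent_fin_cons]
  refine ⟨h, ?_⟩
  have : Set.range ![v, w] = {v, w} := by
    ext y
    simp [Matrix.range_cons, Matrix.range_empty, or_comm]
  rwa [this]

lemma li_pair01 {a v w : Fin 3 → ℝ} (h : LinearIndependent ℝ ![a, v, w]) :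
    LinearIndependent ℝ ![a, v] := by
  have := h.comp ![0, 1] (by decide)
  convert this using 1
  funext i; fin_cases i <;> rfl

lemma li_pair02 {a v w : Fin 3 → ℝ} (h : LinearIndependent ℝ ![a, v, w]) :
    LinearIndependent ℝ ![a, w] := by
  have := h.comp ![0, 2] (by decide)
  convert this using 1
  funext i; fin_cases i <;> rfl

end Aux

/-- **The velocity of an isometric motion of the belt is proportional to the flexibility
vector field `ξₙ`.**  If `vᵢ, wᵢ : ℝ → ℝ³` give an isometric motion of the belt of a
Kokotsakis mesh (all mutual scalar products constant, central face fixed), and the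
configuration at time `t₀` is in general position, then there is a `λ ∈ ℝ` with
`vᵢ'(t₀) = λ Π_{i-1} [a_{i-1}, vᵢ(t₀)]` and `wᵢ'(t₀) = λ Πᵢ [aᵢ, wᵢ(t₀)]` for all `i`. -/
theorem stmt11 (n : ℕ) [NeZero n] (hn : 3 ≤ n)
    (A : ZMod n → (Fin 3 → ℝ))
    (a : ZMod n → (Fin 3 → ℝ)) (ha : ∀ i, a i = A (i + 1) - A i)
    (v w : ZMod n → ℝ → (Fin 3 → ℝ))
    (hv : ∀ i, Differentiable ℝ (v i)) (hw : ∀ i, Differentiable ℝ (w i))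
    -- the motion is isometric: all relevant scalar products are constant in time
    (hvv : ∀ i, ∀ s u : ℝ, v i s ⬝ᵥ v i s = v i u ⬝ᵥ v i u)
    (hww : ∀ i, ∀ s u : ℝ, w i s ⬝ᵥ w i s = w i u ⬝ᵥ w i u)
    (hvw : ∀ i, ∀ s u : ℝ, v i s ⬝ᵥ w i s = v i u ⬝ᵥ w i u)
    (hav : ∀ i, ∀ s u : ℝ, a (i - 1) ⬝ᵥ v i s = a (i - 1) ⬝ᵥ v i u)
    (haw : ∀ i, ∀ s u : ℝ, a i ⬝ᵥ w i s = a i ⬝ᵥ w i u)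
    (hwv : ∀ i, ∀ s u : ℝ, w i s ⬝ᵥ v (i + 1) s = w i u ⬝ᵥ v (i + 1) u)
    (t₀ : ℝ)
    -- general position at time `t₀`
    (hli : ∀ i, LinearIndependent ℝ ![v i t₀, w i t₀])
    (hprev : ∀ i, a (i - 1) ∉ Submodule.span ℝ ({v i t₀, w i t₀} : Set (Fin 3 → ℝ)))
    (hnext : ∀ i, a i ∉ Submodule.span ℝ ({v i t₀, w i t₀} : Set (Fin 3 → ℝ)))
    (hgen : ∀ i, tripleProd (a i) (w i t₀) (v (i + 1) t₀) ≠ 0)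
    -- the partial products `Πᵢ = ∏_{j=1}^{i} ρⱼ`
    (Pi : ℕ → ℝ)
    (hPi : ∀ i : ℕ, Pi i = ∏ j ∈ Finset.Icc 1 i,
      tripleProd (a ((j : ZMod n) - 1)) (v (j : ZMod n) t₀) (w (j : ZMod n) t₀) /
        tripleProd (a (j : ZMod n)) (v (j : ZMod n) t₀) (w (j : ZMod n) t₀)) :
    ∃ l : ℝ, ∀ i ∈ Finset.Icc 1 n,
      deriv (v (i : ZMod n)) t₀ =
        (l * Pi (i - 1)) • crossProduct (a ((i : ZMod n) - 1)) (v (i : ZMod n) t₀) ∧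
      deriv (w (i : ZMod n)) t₀ =
        (l * Pi i) • crossProduct (a (i : ZMod n)) (w (i : ZMod n) t₀) := by
  -- derivative orthogonality relations
  have oVV : ∀ i, deriv (v i) t₀ ⬝ᵥ v i t₀ = 0 := fun i => deriv_self_dot (hv i) t₀ (hvv i)
  have oWW : ∀ i, deriv (w i) t₀ ⬝ᵥ w i t₀ = 0 := fun i => deriv_self_dot (hw i) t₀ (hww i)
  have oVW : ∀ i, deriv (v i) t₀ ⬝ᵥ w i t₀ + v i t₀ ⬝ᵥ deriv (w i) t₀ = 0 :=
    fun i => deriv_dot_eq_zero (hv i) (hw i) t₀ (hvw i)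
  have oAV : ∀ i, a (i - 1) ⬝ᵥ deriv (v i) t₀ = 0 := fun i => deriv_const_dot (hv i) t₀ (hav i)
  have oAW : ∀ i, a i ⬝ᵥ deriv (w i) t₀ = 0 := fun i => deriv_const_dot (hw i) t₀ (haw i)
  have oWV : ∀ i, deriv (w i) t₀ ⬝ᵥ v (i + 1) t₀ + w i t₀ ⬝ᵥ deriv (v (i + 1)) t₀ = 0 :=
    fun i => deriv_dot_eq_zero (hw i) (hv (i + 1)) t₀ (hwv i)
  -- linear independence of triples
  have hli3p : ∀ i, LinearIndependent ℝ ![a (i - 1), v i t₀, w i t₀] :=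
    fun i => li_cons (hli i) (hprev i)
  have hli3n : ∀ i, LinearIndependent ℝ ![a i, v i t₀, w i t₀] :=
    fun i => li_cons (hli i) (hnext i)
  have T1ne : ∀ i, tripleProd (a (i - 1)) (v i t₀) (w i t₀) ≠ 0 :=
    fun i => triple_ne_zero (hli3p i)
  have T2ne : ∀ i, tripleProd (a i) (v i t₀) (w i t₀) ≠ 0 :=
    fun i => triple_ne_zero (hli3n i)
  -- the velocities are proportional to the cross products
  have hμex : ∀ i, ∃ μ : ℝ, deriv (v i) t₀ = μ • crossProduct (a (i - 1)) (v i t₀) :=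
    fun i => key_perp (li_pair01 (hli3p i))
      (by rw [dotProduct_comm]; exact oAV i) (oVV i)
  have hνex : ∀ i, ∃ ν : ℝ, deriv (w i) t₀ = ν • crossProduct (a i) (w i t₀) :=
    fun i => key_perp (li_pair02 (hli3n i))
      (by rw [dotProduct_comm]; exact oAW i) (oWW i)
  choose μ hμ using hμex
  choose ν hν using hνex
  -- relation A: ν i = μ i * ρ i
  have relA : ∀ i, ν i = μ i *
      (tripleProd (a (i - 1)) (v i t₀) (w i t₀) / tripleProd (a i) (v i t₀) (w i t₀)) := by
    intro i
    have h := oVW i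
    rw [hμ i, hν i, smul_dotProduct, dotProduct_smul, cross_dot_left, dot_cross'] at h
    simp only [smul_eq_mul, mul_neg] at h
    rw [← mul_div_assoc, eq_div_iff (T2ne i)]
    linarith
  -- relation B: μ (i+1) = ν i
  have relB : ∀ i, μ (i + 1) = ν i := by
    intro i
    have h := oWV i
    rw [hν i, hμ (i + 1), add_sub_cancel_right, smul_dotProduct, dotProduct_smul,
      cross_dot_left, dot_cross'] at h
    simp only [smul_eq_mul, mul_neg] at h
    have h' : μ (i + 1) * tripleProd (a i) (w i t₀) (v (i + 1) t₀)
        = ν i * tripleProd (a i) (w i t₀) (v (i + 1) t₀) := by linarith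
    exact mul_right_cancel₀ (hgen i) h'
  -- induction giving the scalars along the belt
  have main : ∀ k : ℕ, 1 ≤ k →
      μ ((k : ℕ) : ZMod n) = μ 1 * Pi (k - 1) ∧ ν ((k : ℕ) : ZMod n) = μ 1 * Pi k := by
    intro k hk
    induction k, hk using Nat.le_induction with
    | base =>
      have hPi0 : Pi 0 = 1 := by rw [hPi]; simp
      have hPi1 : Pi 1 = tripleProd (a ((1 : ZMod n) - 1)) (v 1 t₀) (w 1 t₀) /
          tripleProd (a (1 : ZMod n)) (v 1 t₀) (w 1 t₀) := by
        rw [hPi]; simp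
      constructor
      · simp [hPi0]
      · rw [show ((1 : ℕ) : ZMod n) = 1 from Nat.cast_one, relA 1, hPi1]
    | succ k hk ih =>
      have hcast : ((k + 1 : ℕ) : ZMod n) = (k : ZMod n) + 1 := by push_cast; ring
      constructor
      · rw [hcast, relB (k : ZMod n), ih.2]
        simp
      · rw [hcast, relA ((k : ZMod n) + 1), relB (k : ZMod n), ih.2,
          hPi (k + 1), Finset.prod_Icc_succ_top (by omega : 1 ≤ k + 1), ← hPi k, hcast]
        ring
  refine ⟨μ 1, ?_⟩
  intro i hi
  rw [Finset.mem_Icc] at hi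
  obtain ⟨hμi, hνi⟩ := main i hi.1
  exact ⟨by rw [hμ (i : ZMod n), hμi], by rw [hν (i : ZMod n), hνi]⟩
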